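/- Let R be a regular F-finite domain of prime characteristic p, 𝔞 a nonzero ideal of R, and t, s nonnegative real numbers with t < 1 and s ∈ ℕ. Then 𝔞^[t+s] = 𝔞^[t] · 𝔞^[s] (an analog of Skoda's theorem); in particular, for any t ≥ 0, 𝔞^[t] = 𝔞^[⌊t⌋] · 𝔞^[{t}] where {t} is the fractional part of t. -/

import Mathlib

open scoped BigOperators

/-- The `q`-th bracket power of an ideal: the ideal generated by `q`-th powers
of elements of `a`. -/
def bracketPow {R : Type*} [CommRing R] (a : Ideal R) (q : ℕ) : Ideal R :=
  Ideal.span ((fun x => x ^ q) '' (a : Set R))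

/-- The generalized `k`-th Frobenius power of an ideal, defined via the base-`p`
digits of `k`:  `𝔞^[k] = ∏ᵢ (𝔞^[pⁱ])^(kᵢ)` where `kᵢ = k / pⁱ % p` is the `i`-th
base-`p` digit of `k` (digits with index `> k` vanish, so the product below suffices). -/
def frobPow {R : Type*} [CommRing R] (p : ℕ) (a : Ideal R) (k : ℕ) : Ideal R :=
  ∏ i ∈ Finset.range (k + 1), bracketPow a (p ^ i) ^ (k / p ^ i % p)

/-- The `q`-th Frobenius root `𝔠^[1/q]`: the smallest ideal `𝔡` with `𝔠 ⊆ 𝔡^[q]`.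
(Over a regular F-finite domain the infimum below is itself such an ideal, by
flatness of Frobenius, so it is indeed the smallest one.) -/
def frobRoot {R : Type*} [CommRing R] (q : ℕ) (c : Ideal R) : Ideal R :=
  sInf {d : Ideal R | c ≤ bracketPow d q}

/-- The `p`-rational Frobenius power `𝔞^[k/pᵉ] = (𝔞^[k])^[1/pᵉ]`, given in terms of a
representation `k/pᵉ` of a nonnegative `p`-rational number. -/
def pRatPow {R : Type*} [CommRing R] (p : ℕ) (a : Ideal R) (k e : ℕ) : Ideal R :=
  frobRoot (p ^ e) (frobPow p a k)

/-- The real Frobenius power `𝔞^[t]`: by monotonicity and right constancy of the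
`p`-rational powers, the eventual stable value of `𝔞^[t_k]` along any sequence of
`p`-rational numbers `t_k` decreasing to `t` is the supremum of `𝔞^[c]` over all
`p`-rational `c ≥ t`. -/
noncomputable def realFrobPow {R : Type*} [CommRing R] (p : ℕ) (a : Ideal R) (t : ℝ) :
    Ideal R :=
  ⨆ (k : ℕ) (e : ℕ) (_ : t ≤ (k : ℝ) / (p : ℝ) ^ e), pRatPow p a k e

/-- The test ideal `τ(𝔞^t) = ⋃_q (𝔞^{⌈tq⌉})^[1/q]` (the union being a supremum that
stabilizes for `q ≫ 0`). -/
noncomputable def testIdeal {R : Type*} [CommRing R] (p : ℕ) (a : Ideal R) (t : ℝ) :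
    Ideal R :=
  ⨆ e : ℕ, frobRoot (p ^ e) (a ^ ⌈t * (p : ℝ) ^ e⌉₊)

section Aux

theorem exists_dual_basis' {R S : Type*} [CommRing R] [CommRing S] [IsNoetherianRing R]
    (f : R →+* S) (hfin : f.Finite) (hflat : f.Flat) :
    ∃ c : S → (S →₀ R),
      (∀ x : S, x = (c x).sum fun i r => f r * i) ∧
      (∀ x y : S, c (x + y) = c x + c y) ∧
      (∀ (r : R) (x : S), c (f r * x) = r • c x) := by
  letI := f.toAlgebra
  haveI hFin : Module.Finite R S := hfin
  haveI hFlat : Module.Flat R S := hflat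
  haveI : Module.FinitePresentation R S := Module.finitePresentation_of_finite R S
  haveI hproj : Module.Projective R S := by
    rw [← Module.freeLocus_eq_univ_iff]
    exact Module.freeLocus_eq_univ
  obtain ⟨s, hs⟩ := hproj.out
  have hsm : ∀ (r : R) (x : S), f r * x = r • x := by
    intro r x
    rw [Algebra.smul_def, RingHom.algebraMap_toAlgebra]
  refine ⟨s, ?_, fun x y => map_add s x y, fun r x => ?_⟩
  · intro x
    conv_lhs => rw [← hs x]
    rw [Finsupp.linearCombination_apply]
    exact Finsupp.sum_congr fun i _ => by rw [← hsm]; rfl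
  · rw [hsm, map_smul]

variable {R : Type*} [CommRing R] (p : ℕ) [Fact p.Prime] [CharP R p]

theorem iterFrob_finite_flat [IsDomain R] (hFfin : (frobenius R p).Finite)
    (hreg : (frobenius R p).Flat) (e : ℕ) :
    (iterateFrobenius R p e).Finite ∧ (iterateFrobenius R p e).Flat := by
  induction e with
  | zero =>
    rw [iterateFrobenius_zero]
    refine ⟨RingHom.Finite.id R, ?_⟩
    rw [← RingHom.one_def]
    exact RingHom.Flat.id R
  | succ n ih =>
    have h : iterateFrobenius R p (n + 1) = (frobenius R p).comp (iterateFrobenius R p n) := by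
      rw [add_comm n 1, iterateFrobenius_add, iterateFrobenius_one]
    rw [h]
    refine ⟨RingHom.Finite.comp hFfin ih.1, ?_⟩
    haveI := ih.2
    haveI := hreg
    exact RingHom.Flat.comp ih.2 hreg

end Aux


section Basics

variable {R : Type*} [CommRing R] {p : ℕ} [Fact p.Prime] [CharP R p]

lemma hp1 : 1 < p := (Fact.out : p.Prime).one_lt

lemma bracketPow_one' (a : Ideal R) : bracketPow a 1 = a := by
  unfold bracketPow
  simp only [pow_one, Set.image_id', Ideal.span_eq]

lemma bracketPow_eq_map (a : Ideal R) (e : ℕ) :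
    bracketPow a (p ^ e) = a.map (iterateFrobenius R p e) := rfl

lemma map_frob_le_self (d : Ideal R) (e : ℕ) : d.map (iterateFrobenius R p e) ≤ d := by
  rw [Ideal.map, Ideal.span_le]
  rintro y ⟨x, hx, rfl⟩
  show iterateFrobenius R p e x ∈ d
  rw [iterateFrobenius_def]
  exact d.pow_mem_of_mem hx _ (pow_pos (Fact.out : p.Prime).pos e)

lemma map_frobenius_le_pow (a : Ideal R) : a.map (frobenius R p) ≤ a ^ p := by
  rw [Ideal.map, Ideal.span_le]
  rintro y ⟨x, hx, rfl⟩
  exact Ideal.pow_mem_pow hx p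

lemma frobRoot_le {q : ℕ} {c d : Ideal R} (h : c ≤ bracketPow d q) : frobRoot q c ≤ d :=
  sInf_le h

lemma frobRoot_mono {q : ℕ} {c c' : Ideal R} (h : c ≤ c') : frobRoot q c ≤ frobRoot q c' :=
  le_sInf fun _ hd => sInf_le (h.trans hd)

lemma frobRoot_one (c : Ideal R) : frobRoot 1 c = c := by
  refine le_antisymm (sInf_le ?_) (le_sInf fun d hd => ?_)
  · show c ≤ bracketPow c 1
    rw [bracketPow_one']
  · rwa [Set.mem_setOf_eq, bracketPow_one'] at hd

lemma frobRoot_map_le (X : Ideal R) (e : ℕ) :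
    frobRoot (p ^ e) (X.map (iterateFrobenius R p e)) ≤ X :=
  sInf_le (by rw [Set.mem_setOf_eq, bracketPow_eq_map])

end Basics

section Digits

variable {R : Type*} [CommRing R] {p : ℕ} [Fact p.Prime] [CharP R p]

lemma frobPow_zero (a : Ideal R) : frobPow p a 0 = ⊤ := by
  unfold frobPow
  simp

lemma frobPow_eq_prod (a : Ideal R) {k n : ℕ} (hn : k < n) :
    frobPow p a k = ∏ i ∈ Finset.range n, bracketPow a (p ^ i) ^ (k / p ^ i % p) := by
  unfold frobPow
  refine Finset.prod_subset (Finset.range_subset_range.mpr hn) ?_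
  intro i hi hni
  have hki : k < i := by
    simp only [Finset.mem_range, not_lt] at hni
    omega
  have : k < p ^ i := hki.trans (Nat.lt_pow_self (n := i) hp1)
  rw [Nat.div_eq_of_lt this]
  simp

lemma ideal_map_prod {ι : Type*} (f : R →+* R) (s : Finset ι) (g : ι → Ideal R) :
    (∏ i ∈ s, g i).map f = ∏ i ∈ s, (g i).map f := by
  classical
  induction s using Finset.induction_on with
  | empty => simp [Ideal.one_eq_top, Ideal.map_top]
  | insert _ _ hx ih => rw [Finset.prod_insert hx, Finset.prod_insert hx, Ideal.map_mul, ih]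

lemma frobPow_rec (a : Ideal R) (k : ℕ) :
    frobPow p a k = a ^ (k % p) * (frobPow p a (k / p)).map (frobenius R p) := by
  rcases Nat.eq_zero_or_pos k with rfl | hk
  · simp [frobPow_zero, Nat.zero_div, Ideal.map_top]
  have h0 : frobPow p a k = ∏ i ∈ Finset.range (k + 1), bracketPow a (p ^ i) ^ (k / p ^ i % p) :=
    rfl
  rw [h0, Finset.prod_range_succ']
  have hterm : ∀ i : ℕ, bracketPow a (p ^ (i + 1)) ^ (k / p ^ (i + 1) % p) =
      ((bracketPow a (p ^ i) ^ (k / p / p ^ i % p)).map (frobenius R p)) := by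
    intro i
    have h1 : bracketPow a (p ^ (i + 1)) = (bracketPow a (p ^ i)).map (frobenius R p) := by
      rw [bracketPow_eq_map, bracketPow_eq_map, Ideal.map_map, ← iterateFrobenius_one (R := R) p,
        ← iterateFrobenius_add, add_comm i 1]
    have h2 : k / p ^ (i + 1) = k / p / p ^ i := by
      rw [Nat.div_div_eq_div_mul, ← pow_succ']
    rw [h1, h2, Ideal.map_pow]
  calc (∏ i ∈ Finset.range k, bracketPow a (p ^ (i + 1)) ^ (k / p ^ (i + 1) % p)) *
        bracketPow a (p ^ 0) ^ (k / p ^ 0 % p)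
      = (∏ i ∈ Finset.range k, (bracketPow a (p ^ i) ^ (k / p / p ^ i % p)).map
          (frobenius R p)) * a ^ (k % p) := by
        rw [Finset.prod_congr rfl fun i _ => hterm i]
        simp [bracketPow_one']
    _ = a ^ (k % p) * (frobPow p a (k / p)).map (frobenius R p) := by
        rw [← ideal_map_prod, ← frobPow_eq_prod a (Nat.div_lt_self hk hp1), mul_comm]

end Digits

section Digits2

variable {R : Type*} [CommRing R] {p : ℕ} [Fact p.Prime] [CharP R p]

lemma frobPow_succ_le (a : Ideal R) : ∀ x : ℕ, frobPow p a (x + 1) ≤ frobPow p a x * a := by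
  intro x
  induction x using Nat.strong_induction_on with
  | _ x ih =>
  have hp0 : 0 < p := (Fact.out : p.Prime).pos
  have hp2 : 1 < p := hp1
  rw [frobPow_rec a (x + 1), frobPow_rec a x]
  by_cases h : x % p = p - 1
  · -- carry case
    have hxm := Nat.mod_le x p
    have hx1 : 1 ≤ x := by omega
    have hxp : (x + 1) % p = 0 := by
      rw [Nat.add_mod, h, Nat.one_mod_eq_one.mpr hp2.ne', Nat.sub_add_cancel hp0]
      simp
    have hdiv : (x + 1) / p = x / p + 1 := by
      rw [Nat.succ_div, if_pos (Nat.dvd_of_mod_eq_zero hxp)]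
    have hd : x / p < x := Nat.div_lt_self hx1 hp2
    have step : frobPow p a (x / p + 1) ≤ frobPow p a (x / p) * a := ih _ hd
    calc a ^ ((x + 1) % p) * (frobPow p a ((x + 1) / p)).map (frobenius R p)
        = (frobPow p a (x / p + 1)).map (frobenius R p) := by
          rw [hxp, hdiv, pow_zero, one_mul]
      _ ≤ (frobPow p a (x / p) * a).map (frobenius R p) := Ideal.map_mono step
      _ = (frobPow p a (x / p)).map (frobenius R p) * a.map (frobenius R p) := Ideal.map_mul _ _ _
      _ ≤ (frobPow p a (x / p)).map (frobenius R p) * a ^ p :=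
          Ideal.mul_mono le_rfl (map_frobenius_le_pow a)
      _ = a ^ (x % p) * (frobPow p a (x / p)).map (frobenius R p) * a := by
          rw [h]
          have hap : a ^ p = a ^ (p - 1) * a := by
            rw [← pow_succ, Nat.sub_add_cancel hp0]
          rw [hap]
          ring
  · -- no carry
    have hlt : x % p + 1 < p := by
      have := Nat.mod_lt x hp0
      omega
    have hxp : (x + 1) % p = x % p + 1 := by
      rw [Nat.add_mod, Nat.one_mod_eq_one.mpr hp2.ne', Nat.mod_eq_of_lt hlt]
    have hdvd : ¬ p ∣ (x + 1) := by
      intro hd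
      obtain ⟨c, hc⟩ := hd
      have h0 : (x + 1) % p = 0 := by rw [hc, Nat.mul_mod_right]
      omega
    have hdiv : (x + 1) / p = x / p := by
      rw [Nat.succ_div, if_neg hdvd]
      simp
    rw [hxp, hdiv, pow_succ]
    exact le_of_eq (by ring)

lemma frobPow_anti (a : Ideal R) {k k' : ℕ} (h : k ≤ k') : frobPow p a k' ≤ frobPow p a k := by
  induction k', h using Nat.le_induction with
  | base => exact le_rfl
  | succ n hn ih => exact le_trans (le_trans (frobPow_succ_le a n) Ideal.mul_le_left) ih

lemma frobPow_add_le' (a : Ideal R) : ∀ K m n : ℕ, m + n = K →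
    frobPow p a (m + n) ≤ frobPow p a m * frobPow p a n := by
  intro K
  induction K using Nat.strong_induction_on with
  | _ K ih =>
  intro m n hK
  have hp0 : 0 < p := (Fact.out : p.Prime).pos
  have hp2 : 1 < p := hp1
  rcases Nat.eq_zero_or_pos (m + n) with h0 | hpos
  · have hm : m = 0 := by omega
    have hn : n = 0 := by omega
    subst hm hn
    simp [frobPow_zero, Ideal.one_eq_top]
  have hdivlt : m / p + n / p < K := by
    have h1 : m / p ≤ m / 2 := Nat.div_le_div_left hp2 (by norm_num)
    have h2 : n / p ≤ n / 2 := Nat.div_le_div_left hp2 (by norm_num)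
    have h3 : m / 2 + n / 2 < m + n := by omega
    omega
  have ihd : frobPow p a (m / p + n / p) ≤ frobPow p a (m / p) * frobPow p a (n / p) :=
    ih _ hdivlt _ _ rfl
  rw [frobPow_rec a (m + n), frobPow_rec a m, frobPow_rec a n]
  by_cases h : m % p + n % p < p
  · have hmod : (m + n) % p = m % p + n % p := by
      rw [Nat.add_mod, Nat.mod_eq_of_lt h]
    have hdiv : (m + n) / p = m / p + n / p := by
      rw [Nat.add_div hp0, if_neg (by omega)]
      simp
    rw [hmod, hdiv]
    calc a ^ (m % p + n % p) * (frobPow p a (m / p + n / p)).map (frobenius R p)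
        ≤ a ^ (m % p + n % p) * (frobPow p a (m / p) * frobPow p a (n / p)).map (frobenius R p) :=
          Ideal.mul_mono le_rfl (Ideal.map_mono ihd)
      _ = a ^ (m % p) * (frobPow p a (m / p)).map (frobenius R p) *
          (a ^ (n % p) * (frobPow p a (n / p)).map (frobenius R p)) := by
          rw [Ideal.map_mul, pow_add]
          ring
  · push_neg at h
    have hmod : (m + n) % p = m % p + n % p - p := by
      rw [Nat.add_mod, Nat.mod_eq_sub_mod h, Nat.mod_eq_of_lt (by
        have h1 := Nat.mod_lt m hp0
        have h2 := Nat.mod_lt n hp0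
        omega)]
    have hdiv : (m + n) / p = m / p + n / p + 1 := by
      rw [Nat.add_div hp0, if_pos (by omega)]
    rw [hmod, hdiv]
    calc a ^ (m % p + n % p - p) * (frobPow p a (m / p + n / p + 1)).map (frobenius R p)
        ≤ a ^ (m % p + n % p - p) *
            ((frobPow p a (m / p + n / p) * a).map (frobenius R p)) :=
          Ideal.mul_mono le_rfl (Ideal.map_mono (frobPow_succ_le a _))
      _ ≤ a ^ (m % p + n % p - p) *
            ((frobPow p a (m / p) * frobPow p a (n / p) * a).map (frobenius R p)) :=
          Ideal.mul_mono le_rfl (Ideal.map_mono (Ideal.mul_mono ihd le_rfl))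
      _ = a ^ (m % p + n % p - p) * ((frobPow p a (m / p)).map (frobenius R p) *
            (frobPow p a (n / p)).map (frobenius R p) * a.map (frobenius R p)) := by
          rw [Ideal.map_mul, Ideal.map_mul]
      _ ≤ a ^ (m % p + n % p - p) * ((frobPow p a (m / p)).map (frobenius R p) *
            (frobPow p a (n / p)).map (frobenius R p) * a ^ p) :=
          Ideal.mul_mono le_rfl (Ideal.mul_mono le_rfl (map_frobenius_le_pow a))
      _ = a ^ (m % p) * (frobPow p a (m / p)).map (frobenius R p) *
          (a ^ (n % p) * (frobPow p a (n / p)).map (frobenius R p)) := by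
          have hpow : a ^ (m % p + n % p - p) * a ^ p = a ^ (m % p) * a ^ (n % p) := by
            rw [← pow_add, ← pow_add, Nat.sub_add_cancel h]
          calc a ^ (m % p + n % p - p) * ((frobPow p a (m / p)).map (frobenius R p) *
                (frobPow p a (n / p)).map (frobenius R p) * a ^ p)
              = a ^ (m % p + n % p - p) * a ^ p * ((frobPow p a (m / p)).map (frobenius R p) *
                (frobPow p a (n / p)).map (frobenius R p)) := by ring
            _ = a ^ (m % p) * a ^ (n % p) * ((frobPow p a (m / p)).map (frobenius R p) *
                (frobPow p a (n / p)).map (frobenius R p)) := by rw [hpow]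
            _ = _ := by ring

lemma frobPow_add_le (a : Ideal R) (m n : ℕ) :
    frobPow p a (m + n) ≤ frobPow p a m * frobPow p a n :=
  frobPow_add_le' a (m + n) m n rfl

lemma frobPow_split (a : Ideal R) (s : ℕ) :
    ∀ e k : ℕ, k < p ^ e → frobPow p a (k + s * p ^ e) =
      frobPow p a k * (frobPow p a s).map (iterateFrobenius R p e) := by
  intro e
  induction e with
  | zero =>
    intro k hk
    have hk0 : k = 0 := by rw [pow_zero] at hk; omega
    subst hk0
    simp [frobPow_zero, iterateFrobenius_zero, Ideal.map_id]
  | succ e ihe =>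
    intro k hk
    have hp0 : 0 < p := (Fact.out : p.Prime).pos
    have harr : k + s * p ^ (e + 1) = k + (s * p ^ e) * p := by ring
    have hmod : (k + s * p ^ (e + 1)) % p = k % p := by
      rw [harr, Nat.add_mul_mod_self_right]
    have hdiv : (k + s * p ^ (e + 1)) / p = k / p + s * p ^ e := by
      rw [harr, Nat.add_mul_div_right _ _ hp0]
    have hklt : k / p < p ^ e := by
      rw [Nat.div_lt_iff_lt_mul hp0, ← pow_succ]
      exact hk
    rw [frobPow_rec a (k + s * p ^ (e + 1)), frobPow_rec a k, hmod, hdiv,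
      ihe (k / p) hklt, Ideal.map_mul, Ideal.map_map]
    have hcomp : (frobenius R p).comp (iterateFrobenius R p e) = iterateFrobenius R p (e + 1) := by
      rw [add_comm e 1, iterateFrobenius_add, iterateFrobenius_one]
    rw [hcomp, mul_assoc]

lemma frobPow_mul_pow (a : Ideal R) (s e : ℕ) :
    frobPow p a (s * p ^ e) = (frobPow p a s).map (iterateFrobenius R p e) := by
  have h := frobPow_split a s e 0 (pow_pos (Fact.out : p.Prime).pos e)
  simpa [frobPow_zero] using h

end Digits2

section Roots

variable {R : Type*} [CommRing R] {p : ℕ} [Fact p.Prime] [CharP R p] {e : ℕ} {c : R → R →₀ R}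

lemma c_zero (hadd : ∀ x y : R, c (x + y) = c x + c y) : c 0 = 0 := by
  have h := hadd 0 0
  rw [add_zero] at h
  exact (left_eq_add.mp h)

lemma coord_mem
    (hadd : ∀ x y : R, c (x + y) = c x + c y)
    (hsmul : ∀ (r x : R), c (iterateFrobenius R p e r * x) = r • c x)
    {d : Ideal R} {x : R} (hx : x ∈ d.map (iterateFrobenius R p e)) (i : R) : c x i ∈ d := by
  have main : ∀ y ∈ Ideal.span ((iterateFrobenius R p e) '' (d : Set R)),
      ∀ r i : R, c (r * y) i ∈ d := by
    intro y hy
    induction hy using Submodule.span_induction with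
    | mem y hy =>
      obtain ⟨z, hz, rfl⟩ := hy
      intro r i
      rw [mul_comm, hsmul, Finsupp.smul_apply, smul_eq_mul]
      exact d.mul_mem_right _ hz
    | zero =>
      intro r i
      rw [mul_zero, c_zero hadd]
      exact d.zero_mem
    | add y z hy hz ihy ihz =>
      intro r i
      rw [mul_add, hadd, Finsupp.add_apply]
      exact d.add_mem (ihy r i) (ihz r i)
    | smul t y hy ihy =>
      intro r i
      rw [smul_eq_mul, show r * (t * y) = r * t * y by ring]
      exact ihy (r * t) i
  have h := main x hx 1 i
  rwa [one_mul] at h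

lemma le_span_map
    (hsum : ∀ x : R, x = (c x).sum fun i r => iterateFrobenius R p e r * i)
    (X : Ideal R) :
    X ≤ (Ideal.span {y | ∃ x ∈ X, ∃ i : R, c x i = y}).map (iterateFrobenius R p e) := by
  intro x hx
  have h := hsum x
  rw [h, Finsupp.sum]
  refine Submodule.sum_mem _ fun i _ => ?_
  exact Ideal.mul_mem_right _ _
    (Ideal.mem_map_of_mem _ (Ideal.subset_span ⟨x, hx, i, rfl⟩))

lemma frobRoot_eq_span
    (hsum : ∀ x : R, x = (c x).sum fun i r => iterateFrobenius R p e r * i)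
    (hadd : ∀ x y : R, c (x + y) = c x + c y)
    (hsmul : ∀ (r x : R), c (iterateFrobenius R p e r * x) = r • c x)
    (X : Ideal R) :
    frobRoot (p ^ e) X = Ideal.span {y | ∃ x ∈ X, ∃ i : R, c x i = y} := by
  refine le_antisymm (sInf_le ?_) (le_sInf fun d hd => ?_)
  · show X ≤ bracketPow _ (p ^ e)
    rw [bracketPow_eq_map]
    exact le_span_map hsum X
  · rw [Set.mem_setOf_eq, bracketPow_eq_map] at hd
    rw [Ideal.span_le]
    rintro y ⟨x, hxX, i, rfl⟩
    exact coord_mem hadd hsmul (hd hxX) i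

lemma frobRoot_mul_map
    (hsum : ∀ x : R, x = (c x).sum fun i r => iterateFrobenius R p e r * i)
    (hadd : ∀ x y : R, c (x + y) = c x + c y)
    (hsmul : ∀ (r x : R), c (iterateFrobenius R p e r * x) = r • c x)
    (cc b : Ideal R) :
    frobRoot (p ^ e) ((cc.map (iterateFrobenius R p e)) * b) = cc * frobRoot (p ^ e) b := by
  rw [frobRoot_eq_span hsum hadd hsmul, frobRoot_eq_span hsum hadd hsmul]
  refine le_antisymm ?_ ?_
  · rw [Ideal.span_le]
    rintro y ⟨x, hx, i, rfl⟩
    have main : ∀ i : R, c x i ∈ cc * Ideal.span {y | ∃ x ∈ b, ∃ i : R, c x i = y} := by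
      refine Submodule.mul_induction_on hx ?_ ?_
      · intro m hm n hn
        have hQ : ∀ m' ∈ Ideal.span ((iterateFrobenius R p e) '' (cc : Set R)),
            ∀ z ∈ b, ∀ i : R,
            c (m' * z) i ∈ cc * Ideal.span {y | ∃ x ∈ b, ∃ i : R, c x i = y} := by
          intro m' hm'
          induction hm' using Submodule.span_induction with
          | mem y hy =>
            obtain ⟨u, hu, rfl⟩ := hy
            intro z hz i
            rw [hsmul, Finsupp.smul_apply, smul_eq_mul]
            exact Ideal.mul_mem_mul hu (Ideal.subset_span ⟨z, hz, i, rfl⟩)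
          | zero =>
            intro z hz i
            rw [zero_mul, c_zero hadd]
            exact Submodule.zero_mem _
          | add y₁ y₂ h₁ h₂ ih₁ ih₂ =>
            intro z hz i
            rw [add_mul, hadd, Finsupp.add_apply]
            exact Submodule.add_mem _ (ih₁ z hz i) (ih₂ z hz i)
          | smul t y hy ihy =>
            intro z hz i
            rw [smul_eq_mul, show t * y * z = y * (t * z) by ring]
            exact ihy (t * z) (b.mul_mem_left t hz) i
        exact hQ m hm n hn
      · intro y₁ y₂ ih₁ ih₂ i
        rw [hadd, Finsupp.add_apply]
        exact Submodule.add_mem _ (ih₁ i) (ih₂ i)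
    exact main i
  · rw [Ideal.mul_le]
    intro r hr y hy
    induction hy using Submodule.span_induction with
    | mem y hy =>
      obtain ⟨z, hz, i, rfl⟩ := hy
      have : r * c z i = c (iterateFrobenius R p e r * z) i := by
        rw [hsmul, Finsupp.smul_apply, smul_eq_mul]
      rw [this]
      exact Ideal.subset_span
        ⟨_, Ideal.mul_mem_mul (Ideal.mem_map_of_mem _ hr) hz, i, rfl⟩
    | zero =>
      rw [mul_zero]
      exact Submodule.zero_mem _
    | add y₁ y₂ h₁ h₂ ih₁ ih₂ =>
      rw [mul_add]
      exact Submodule.add_mem _ ih₁ ih₂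
    | smul t y hy ihy =>
      rw [smul_eq_mul, show r * (t * y) = t * (r * y) by ring]
      exact Ideal.mul_mem_left _ t ihy

lemma map_le_map_cancel
    (hsum : ∀ x : R, x = (c x).sum fun i r => iterateFrobenius R p e r * i)
    (hadd : ∀ x y : R, c (x + y) = c x + c y)
    (hsmul : ∀ (r x : R), c (iterateFrobenius R p e r * x) = r • c x)
    {I J : Ideal R}
    (h : I.map (iterateFrobenius R p e) ≤ J.map (iterateFrobenius R p e)) : I ≤ J := by
  intro x hx
  have hcoord : ∀ i : R, c (iterateFrobenius R p e x) i ∈ J := fun i =>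
    coord_mem hadd hsmul (h (Ideal.mem_map_of_mem _ hx)) i
  have hx1 : ∀ i : R, x * c 1 i ∈ J := by
    intro i
    have h1 : c (iterateFrobenius R p e x) = x • c 1 := by
      rw [← hsmul x 1, mul_one]
    have h2 := hcoord i
    rw [h1, Finsupp.smul_apply, smul_eq_mul] at h2
    exact h2
  set T := Ideal.span {y | ∃ i : R, c 1 i = y} with hTdef
  have hT1 : (1 : R) ∈ T.map (iterateFrobenius R p e) := by
    have hmem : ((c 1).sum fun i r => iterateFrobenius R p e r * i) ∈
        T.map (iterateFrobenius R p e) := by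
      rw [Finsupp.sum]
      refine Submodule.sum_mem _ fun i _ => ?_
      exact Ideal.mul_mem_right _ _
        (Ideal.mem_map_of_mem _ (Ideal.subset_span ⟨i, rfl⟩))
    rwa [← hsum 1] at hmem
  have hTtop : T = ⊤ :=
    (Ideal.eq_top_iff_one T).mpr (map_frob_le_self T e hT1)
  have hTle : T ≤ J.colon (Ideal.span {x}) := by
    rw [hTdef, Ideal.span_le]
    rintro y ⟨i, rfl⟩
    exact Ideal.mem_colon_span_singleton.mpr (by rw [mul_comm]; exact hx1 i)
  have hone : (1 : R) ∈ J.colon (Ideal.span {x}) := hTle (hTtop ▸ Submodule.mem_top)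
  have := Ideal.mem_colon_span_singleton.mp hone
  rwa [one_mul] at this

end Roots

section Wrappers

variable {R : Type*} [CommRing R] [IsDomain R] [IsNoetherianRing R]
  {p : ℕ} [Fact p.Prime] [CharP R p]

lemma get_basis (hFfin : (frobenius R p).Finite) (hreg : (frobenius R p).Flat) (e : ℕ) :
    ∃ c : R → (R →₀ R),
      (∀ x : R, x = (c x).sum fun i r => iterateFrobenius R p e r * i) ∧
      (∀ x y : R, c (x + y) = c x + c y) ∧
      (∀ (r x : R), c (iterateFrobenius R p e r * x) = r • c x) := by
  obtain ⟨hfin, hflat⟩ := iterFrob_finite_flat p hFfin hreg e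
  exact exists_dual_basis' _ hfin hflat

lemma pRatPow_rep (hFfin : (frobenius R p).Finite) (hreg : (frobenius R p).Flat)
    (a : Ideal R) (k e j : ℕ) :
    pRatPow p a k e = pRatPow p a (k * p ^ j) (e + j) := by
  obtain ⟨c, hsum, hadd, hsmul⟩ := get_basis hFfin hreg j
  unfold pRatPow
  rw [frobPow_mul_pow]
  have hset : {d : Ideal R | (frobPow p a k).map (iterateFrobenius R p j) ≤
      bracketPow d (p ^ (e + j))} = {d : Ideal R | frobPow p a k ≤ bracketPow d (p ^ e)} := by
    ext d
    simp only [Set.mem_setOf_eq]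
    have hmap : d.map (iterateFrobenius R p (e + j)) =
        (d.map (iterateFrobenius R p e)).map (iterateFrobenius R p j) := by
      rw [Ideal.map_map, ← iterateFrobenius_add, add_comm e j]
    rw [bracketPow_eq_map, bracketPow_eq_map, hmap]
    constructor
    · intro hle
      exact map_le_map_cancel hsum hadd hsmul hle
    · intro hle
      exact Ideal.map_mono hle
  rw [frobRoot, frobRoot, hset]

end Wrappers

section RealPow

variable {R : Type*} [CommRing R] {p : ℕ} [Fact p.Prime] [CharP R p]

lemma pRatPow_zero_exp (a : Ideal R) (k : ℕ) : pRatPow p a k 0 = frobPow p a k := by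
  rw [pRatPow, pow_zero, frobRoot_one]

lemma realFrobPow_natCast (a : Ideal R) (s : ℕ) :
    realFrobPow p a (s : ℝ) = frobPow p a s := by
  refine le_antisymm (iSup_le fun k => iSup_le fun e => iSup_le fun h => ?_) ?_
  · have hppos : (0:ℝ) < (p:ℝ) := by exact_mod_cast (Fact.out : p.Prime).pos
    have hpe : (0:ℝ) < (p:ℝ) ^ e := by positivity
    have hk : (s:ℝ) * (p:ℝ) ^ e ≤ (k:ℝ) := (le_div_iff₀ hpe).mp h
    have hk' : s * p ^ e ≤ k := by exact_mod_cast hk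
    calc pRatPow p a k e ≤ pRatPow p a (s * p ^ e) e := frobRoot_mono (frobPow_anti a hk')
      _ = frobRoot (p ^ e) ((frobPow p a s).map (iterateFrobenius R p e)) := by
          rw [pRatPow, frobPow_mul_pow]
      _ ≤ frobPow p a s := frobRoot_map_le _ e
  · have h0 : frobPow p a s = pRatPow p a s 0 := (pRatPow_zero_exp a s).symm
    rw [h0]
    have hcond : (s:ℝ) ≤ (s:ℝ) / (p:ℝ) ^ 0 := by norm_num
    exact le_iSup_of_le s (le_iSup_of_le 0 (le_iSup_of_le hcond le_rfl))

end RealPow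

/-- Skoda-type theorem for real Frobenius powers. -/
theorem stmt_15 {R : Type*} [CommRing R] [IsDomain R] [IsNoetherianRing R]
    (p : ℕ) [Fact p.Prime] [CharP R p]
    (hFfin : (frobenius R p).Finite) (hreg : (frobenius R p).Flat)
    (a : Ideal R) (ha : a ≠ ⊥) :
    (∀ t : ℝ, 0 ≤ t → t < 1 → ∀ s : ℕ,
        realFrobPow p a (t + s) = realFrobPow p a t * realFrobPow p a (s : ℝ)) ∧
      ∀ t : ℝ, 0 ≤ t →
        realFrobPow p a t =
          realFrobPow p a ((⌊t⌋₊ : ℕ) : ℝ) * realFrobPow p a (Int.fract t) := by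
  have hp2 : 1 < p := hp1
  have hppos : (0:ℝ) < (p:ℝ) := by exact_mod_cast (Fact.out : p.Prime).pos
  have part1 : ∀ t : ℝ, 0 ≤ t → t < 1 → ∀ s : ℕ,
      realFrobPow p a (t + s) = realFrobPow p a t * realFrobPow p a (s : ℝ) := by
    intro t ht ht1 s
    rw [realFrobPow_natCast]
    apply le_antisymm
    · refine iSup_le fun k => iSup_le fun e => iSup_le fun h => ?_
      have hpe : (0:ℝ) < (p:ℝ) ^ e := by positivity
      have hsle : (s:ℝ) ≤ (k:ℝ) / (p:ℝ) ^ e := le_trans (by linarith) h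
      have hsk : s * p ^ e ≤ k := by exact_mod_cast (le_div_iff₀ hpe).mp hsle
      set m := k - s * p ^ e with hmdef
      have hkm : m + s * p ^ e = k := Nat.sub_add_cancel hsk
      have hmr : (m:ℝ) = (k:ℝ) - (s:ℝ) * (p:ℝ) ^ e := by
        rw [hmdef, Nat.cast_sub hsk]
        push_cast
        ring
      have htm : t ≤ (m:ℝ) / (p:ℝ) ^ e := by
        rw [hmr, sub_div]
        have hc : (s:ℝ) * (p:ℝ) ^ e / (p:ℝ) ^ e = (s:ℝ) := by field_simp
        rw [hc]
        have hka : t + (s:ℝ) ≤ (k:ℝ) / (p:ℝ) ^ e := h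
        linarith
      obtain ⟨c, hsum, hadd, hsmul⟩ := get_basis hFfin hreg e
      calc pRatPow p a k e
          = frobRoot (p ^ e) (frobPow p a (m + s * p ^ e)) := by rw [pRatPow, hkm]
        _ ≤ frobRoot (p ^ e) (frobPow p a m * frobPow p a (s * p ^ e)) :=
            frobRoot_mono (frobPow_add_le a m (s * p ^ e))
        _ = frobRoot (p ^ e) ((frobPow p a s).map (iterateFrobenius R p e) * frobPow p a m) := by
            rw [frobPow_mul_pow, mul_comm]
        _ = frobPow p a s * frobRoot (p ^ e) (frobPow p a m) :=
            frobRoot_mul_map hsum hadd hsmul _ _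
        _ ≤ frobPow p a s * realFrobPow p a t := by
            refine Ideal.mul_mono le_rfl ?_
            exact le_iSup_of_le m (le_iSup_of_le e (le_iSup_of_le htm le_rfl))
        _ = realFrobPow p a t * frobPow p a s := mul_comm _ _
    · have hmul : realFrobPow p a t * frobPow p a s =
          ⨆ k : ℕ, ⨆ e : ℕ, ⨆ (_ : t ≤ (k:ℝ) / (p:ℝ) ^ e), pRatPow p a k e * frobPow p a s := by
        rw [realFrobPow, Submodule.iSup_mul]
        refine iSup_congr fun k => ?_
        rw [Submodule.iSup_mul]
        refine iSup_congr fun e => ?_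
        rw [Submodule.iSup_mul]
      rw [hmul]
      refine iSup_le fun k => iSup_le fun e => iSup_le fun h => ?_
      obtain ⟨j, hj⟩ := pow_unbounded_of_one_lt (1 / (1 - t))
        (show (1:ℝ) < (p:ℝ) by exact_mod_cast hp2)
      set E := e + j with hEdef
      have hpE : (0:ℝ) < (p:ℝ) ^ E := by positivity
      have hpe : (0:ℝ) < (p:ℝ) ^ e := by positivity
      have h1t : (0:ℝ) < 1 - t := by linarith
      have hpElt : 1 / (1 - t) < (p:ℝ) ^ E := by
        refine lt_of_lt_of_le hj ?_
        refine pow_le_pow_right₀ (by exact_mod_cast hp2.le) ?_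
        omega
      set K₁ := min (k * p ^ j) (p ^ E - 1) with hK₁def
      have hpEnat : 0 < p ^ E := pow_pos (Fact.out : p.Prime).pos E
      have hK₁lt : K₁ < p ^ E := by
        have hmr : K₁ ≤ p ^ E - 1 := min_le_right _ _
        omega
      have htK₁ : t ≤ (K₁:ℝ) / (p:ℝ) ^ E := by
        rcases min_cases (k * p ^ j) (p ^ E - 1) with ⟨hmin, _⟩ | ⟨hmin, _⟩
        · rw [hK₁def, hmin]
          have hcalc : ((k * p ^ j : ℕ):ℝ) / (p:ℝ) ^ E = (k:ℝ) / (p:ℝ) ^ e := by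
            push_cast
            rw [hEdef, pow_add]
            have hpj : (0:ℝ) < (p:ℝ) ^ j := by positivity
            field_simp
          rw [hcalc]
          exact le_trans (by linarith [Nat.cast_nonneg (α := ℝ) s]) h
        · rw [hK₁def, hmin]
          have hcast : ((p ^ E - 1 : ℕ):ℝ) = (p:ℝ) ^ E - 1 := by
            rw [Nat.cast_sub hpEnat]
            push_cast
            ring
          rw [hcast, le_div_iff₀ hpE]
          rw [div_lt_iff₀ h1t] at hpElt
          nlinarith
      have htsK : t + (s:ℝ) ≤ ((K₁ + s * p ^ E : ℕ):ℝ) / (p:ℝ) ^ E := by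
        push_cast
        rw [add_div]
        have hc : (s:ℝ) * (p:ℝ) ^ E / (p:ℝ) ^ E = (s:ℝ) := by field_simp
        rw [hc]
        linarith
      obtain ⟨c, hsum, hadd, hsmul⟩ := get_basis hFfin hreg E
      have hrep : pRatPow p a k e = pRatPow p a (k * p ^ j) E :=
        pRatPow_rep hFfin hreg a k e j
      calc pRatPow p a k e * frobPow p a s
          = pRatPow p a (k * p ^ j) E * frobPow p a s := by rw [hrep]
        _ ≤ pRatPow p a K₁ E * frobPow p a s :=
            Ideal.mul_mono (frobRoot_mono (frobPow_anti a (min_le_left _ _))) le_rfl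
        _ = frobPow p a s * frobRoot (p ^ E) (frobPow p a K₁) := mul_comm _ _
        _ = frobRoot (p ^ E) ((frobPow p a s).map (iterateFrobenius R p E) * frobPow p a K₁) :=
            (frobRoot_mul_map hsum hadd hsmul _ _).symm
        _ = frobRoot (p ^ E) (frobPow p a (K₁ + s * p ^ E)) := by
            rw [frobPow_split a s E K₁ hK₁lt, mul_comm]
        _ ≤ realFrobPow p a (t + (s:ℝ)) :=
            le_iSup_of_le (K₁ + s * p ^ E) (le_iSup_of_le E (le_iSup_of_le htsK le_rfl))
  refine ⟨part1, ?_⟩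
  intro t ht
  have hfl : ((⌊t⌋₊ : ℕ):ℝ) = ((⌊t⌋ : ℤ):ℝ) := natCast_floor_eq_intCast_floor ht
  have key := part1 (Int.fract t) (Int.fract_nonneg t) (Int.fract_lt_one t) ⌊t⌋₊
  have heq : Int.fract t + ((⌊t⌋₊ : ℕ):ℝ) = t := by
    rw [hfl]
    exact Int.fract_add_floor t
  rw [heq] at key
  rw [key, mul_comm]
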